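/- For every complex number z with |z| < 1 (z ≠ 0), Re((2/√z)·sin(√z/2)) ≥ 13/15 and Re((√z/2)·csc(√z/2)) ≥ 15/17, where (2/√z)·sin(√z/2) is interpreted as the entire function Σ_{k=0}^∞ (−1)^k z^k/(4^k (2k+1)!). -/

import Mathlib

noncomputable def sinSeries (z : ℂ) : ℂ :=
  ∑' k : ℕ, (-1) ^ k * z ^ k / ((4 ^ k * Nat.factorial (2 * k + 1) : ℕ) : ℂ)

lemma key_disk (s : ℂ) (h : ‖s - 1‖ ≤ 2 / 15) :
    13 / 15 ≤ s.re ∧ 15 / 17 ≤ (1 / s).re := by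
  have h2 : (s.re - 1) ^ 2 + s.im ^ 2 ≤ (2 / 15) ^ 2 := by
    have h' : Complex.normSq (s - 1) ≤ (2 / 15) ^ 2 := by
      rw [← Complex.sq_norm]
      have hh : ‖s - 1‖ ≤ 2 / 15 := h
      nlinarith [norm_nonneg (s - 1)]
    simpa [Complex.normSq_apply, Complex.sub_re, Complex.sub_im, sq] using h'
  have hre : 13 / 15 ≤ s.re := by nlinarith [sq_nonneg s.im, sq_nonneg (s.re - 1)]
  refine ⟨hre, ?_⟩
  have hns : 0 < Complex.normSq s := by
    rw [Complex.normSq_apply]; nlinarith [sq_nonneg s.im]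
  rw [one_div, Complex.inv_re, le_div_iff₀ hns, Complex.normSq_apply]
  nlinarith [sq_nonneg s.im, sq_nonneg (s.re - 1)]

theorem sin_re_bounds (z : ℂ) (hz : ‖z‖ < 1) (hz0 : z ≠ 0) :
    13 / 15 ≤ (sinSeries z).re ∧ 15 / 17 ≤ (1 / sinSeries z).re := by
  set f : ℕ → ℂ := fun k => (-1) ^ k * z ^ k / ((4 ^ k * Nat.factorial (2 * k + 1) : ℕ) : ℂ)
    with hf
  have hnorm : ∀ k, ‖f k‖ = ‖z‖ ^ k / ((4 ^ k * Nat.factorial (2 * k + 1) : ℕ) : ℝ) := by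
    intro k
    simp [hf, norm_div, Complex.norm_natCast, abs_pow]
  have hzk : ∀ k : ℕ, ‖z‖ ^ k ≤ 1 :=
    fun k => pow_le_one₀ (norm_nonneg z) hz.le
  have hb : ∀ k, ‖f k‖ ≤ (1 / 4 : ℝ) ^ k := by
    intro k
    rw [hnorm]
    have hfac : (1 : ℝ) ≤ (Nat.factorial (2 * k + 1) : ℝ) := by
      exact_mod_cast Nat.one_le_iff_ne_zero.mpr (Nat.factorial_ne_zero _)
    have h4 : (0 : ℝ) < 4 ^ k := by positivity
    push_cast
    rw [div_le_iff₀ (by positivity)]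
    calc ‖z‖ ^ k ≤ 1 := hzk k
      _ = (1 / 4 : ℝ) ^ k * 4 ^ k := by
          rw [div_pow, one_pow, div_mul_cancel₀]; positivity
      _ ≤ (1 / 4 : ℝ) ^ k * (4 ^ k * (Nat.factorial (2 * k + 1) : ℝ)) := by
          gcongr
          exact le_mul_of_one_le_right h4.le hfac
  have hsum : Summable f := by
    apply Summable.of_norm
    exact Summable.of_nonneg_of_le (fun k => norm_nonneg _) hb
      (summable_geometric_of_lt_one (by norm_num) (by norm_num))
  have hb2 : ∀ k, ‖f (k + 1)‖ ≤ (1 / 6 : ℝ) * (1 / 4 : ℝ) ^ (k + 1) := by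
    intro k
    rw [hnorm]
    have hfac : (6 : ℝ) ≤ (Nat.factorial (2 * (k + 1) + 1) : ℝ) := by
      have : Nat.factorial 3 ≤ Nat.factorial (2 * (k + 1) + 1) :=
        Nat.factorial_le (by omega)
      exact_mod_cast this
    push_cast
    rw [div_le_iff₀ (by positivity)]
    have h1 : ‖z‖ ^ (k + 1) ≤ 1 := hzk (k + 1)
    have h2 : (1 / 4 : ℝ) ^ (k + 1) * 4 ^ (k + 1) = 1 := by
      rw [div_pow, one_pow, div_mul_cancel₀]; positivity
    nlinarith [pow_pos (show (0:ℝ) < 1/4 by norm_num) (k+1),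
      pow_pos (show (0:ℝ) < 4 by norm_num) (k+1)]
  have hgsum : Summable (fun k : ℕ => (1 / 6 : ℝ) * (1 / 4 : ℝ) ^ (k + 1)) := by
    apply Summable.mul_left
    exact (summable_geometric_of_lt_one (by norm_num) (by norm_num)).comp_injective
      (add_left_injective 1)
  have htailsum : Summable fun k => f (k + 1) := by
    apply Summable.of_norm
    exact Summable.of_nonneg_of_le (fun k => norm_nonneg _) hb2 hgsum
  have hf0 : f 0 = 1 := by simp [hf]
  have hsplit : sinSeries z = 1 + ∑' k, f (k + 1) := by
    rw [show sinSeries z = ∑' k, f k from rfl, Summable.tsum_eq_zero_add hsum, hf0]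
  have hgval : (∑' k : ℕ, (1 / 6 : ℝ) * (1 / 4 : ℝ) ^ (k + 1)) = 1 / 18 := by
    rw [tsum_mul_left]
    have : (∑' k : ℕ, (1 / 4 : ℝ) ^ (k + 1)) = 1 / 3 := by
      simp_rw [pow_succ']
      rw [tsum_mul_left, tsum_geometric_of_lt_one (by norm_num) (by norm_num)]
      norm_num
    rw [this]; norm_num
  have htail : ‖sinSeries z - 1‖ ≤ 2 / 15 := by
    rw [hsplit, add_sub_cancel_left]
    calc ‖∑' k, f (k + 1)‖ ≤ ∑' k, ‖f (k + 1)‖ := norm_tsum_le_tsum_norm htailsum.norm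
      _ ≤ ∑' k : ℕ, (1 / 6 : ℝ) * (1 / 4 : ℝ) ^ (k + 1) :=
          Summable.tsum_le_tsum hb2 htailsum.norm hgsum
      _ = 1 / 18 := hgval
      _ ≤ 2 / 15 := by norm_num
  exact key_disk _ htail
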